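/- arXiv:1701.01215 — 4 statements merged into one kernel-verified Lean document; each statement's English description precedes it below -/
import Mathlib

section
/- Let α ∈ ℝ \ {0}, m > 0, and r > 0. Then there is a constant C = C(m), independent of r and α, such that |∫₀^∞ e^{iαt} e^{-r²/t} t^{-m} dt| ≤ C / (|α| r^{2m}). -/
open MeasureTheory Set Filter Real

lemma aux_max {s : ℝ} (hs : 0 < s) {x : ℝ} (hx : 0 < x) :
    Real.exp (-x) * x ^ s ≤ Real.exp (-s) * s ^ s := by
  rw [← Real.log_le_log_iff (by positivity) (by positivity),
    Real.log_mul (Real.exp_ne_zero _) (by positivity),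
    Real.log_mul (Real.exp_ne_zero _) (by positivity),
    Real.log_exp, Real.log_exp, Real.log_rpow hx, Real.log_rpow hs]
  have h := Real.log_le_sub_one_of_pos (show 0 < x / s by positivity)
  rw [Real.log_div hx.ne' hs.ne'] at h
  have h2 := mul_le_mul_of_nonneg_left h hs.le
  rw [mul_sub, mul_sub, mul_div_cancel₀ _ hs.ne', mul_one] at h2
  linarith

lemma aux_meas (c s : ℝ) : Measurable (fun t : ℝ => Real.exp (-(c/t)) * t ^ (-s)) := by
  exact (Real.measurable_exp.comp (measurable_const.div measurable_id).neg).mul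
    (measurable_id.pow_const _)

lemma aux_ptbd {c s : ℝ} (hc : 0 < c) (hs : 0 < s) {t : ℝ} (ht0 : 0 < t) :
    Real.exp (-(c/t)) * t ^ (-s) ≤ Real.exp (-s) * s ^ s / c ^ s := by
  have hx : 0 < c / t := by positivity
  have key := aux_max hs hx
  have h1 : t ^ (-s) = (c/t) ^ s / c ^ s := by
    rw [Real.div_rpow hc.le ht0.le, Real.rpow_neg ht0.le]
    field_simp
  rw [h1, mul_div_assoc']
  gcongr

lemma aux_int {c s : ℝ} (hc : 0 < c) (hs : 1 < s) :
    IntegrableOn (fun t : ℝ => Real.exp (-(c/t)) * t ^ (-s)) (Ioi (0:ℝ)) := by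
  have hmeas := aux_meas c s
  rw [← Set.Ioc_union_Ioi_eq_Ioi (le_of_lt one_pos), integrableOn_union]
  constructor
  · refine Integrable.mono' (integrable_const (Real.exp (-s) * s ^ s / c ^ s))
      hmeas.aestronglyMeasurable.restrict ?_
    rw [ae_restrict_iff' measurableSet_Ioc]
    filter_upwards with t htm
    have ht0 : 0 < t := htm.1
    rw [Real.norm_eq_abs, abs_of_pos (by positivity)]
    exact aux_ptbd hc (lt_trans one_pos hs) ht0
  · refine Integrable.mono' ((integrableOn_Ioi_rpow_of_lt (show -s < -1 by linarith) one_pos))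
      hmeas.aestronglyMeasurable.restrict ?_
    rw [ae_restrict_iff' measurableSet_Ioi]
    filter_upwards with t htm
    have ht0 : (0:ℝ) < t := lt_trans one_pos htm
    rw [Real.norm_eq_abs, abs_of_pos (by positivity)]
    nth_rewrite 2 [show t ^ (-s) = 1 * t ^ (-s) by ring]
    gcongr
    rw [Real.exp_le_one_iff]
    have : 0 ≤ c / t := by positivity
    linarith

lemma aux_scale {c : ℝ} (s : ℝ) (hc : 0 < c) :
    ∫ t in Ioi (0:ℝ), Real.exp (-(c/t)) * t ^ (-s)
      = c ^ (1-s) * ∫ x in Ioi (0:ℝ), Real.exp (-(1/x)) * x ^ (-s) := by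
  have h := MeasureTheory.integral_comp_mul_left_Ioi
    (fun t => Real.exp (-(c/t)) * t ^ (-s)) 0 hc
  rw [mul_zero] at h
  have h2 : ∀ x ∈ Ioi (0:ℝ),
      Real.exp (-(c/(c*x))) * (c*x) ^ (-s) = c ^ (-s) * (Real.exp (-(1/x)) * x ^ (-s)) := by
    intro x hx
    have hx0 : (0:ℝ) < x := hx
    have : c/(c*x) = 1/x := by field_simp
    rw [this, Real.mul_rpow hc.le hx0.le]
    ring
  rw [setIntegral_congr_fun measurableSet_Ioi h2, integral_const_mul, smul_eq_mul] at h
  have := congrArg (fun z => c * z) h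
  rw [mul_inv_cancel_left₀ hc.ne'] at this
  rw [← this, ← mul_assoc]
  congr 1
  rw [Real.rpow_sub hc, Real.rpow_one, Real.rpow_neg hc.le]
  ring

lemma aux_g (m : ℝ) (hm : 0 < m) : ∃ K : ℝ, 0 ≤ K ∧ ∀ r : ℝ, 0 < r →
    IntegrableOn (fun t : ℝ => r^2 * (Real.exp (-(r^2/t)) * t ^ (-(m+2)))
        + m * (Real.exp (-(r^2/t)) * t ^ (-(m+1)))) (Ioi (0:ℝ)) ∧
      (∫ t in Ioi (0:ℝ), (r^2 * (Real.exp (-(r^2/t)) * t ^ (-(m+2)))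
        + m * (Real.exp (-(r^2/t)) * t ^ (-(m+1))))) = (r ^ (2*m))⁻¹ * K := by
  refine ⟨(∫ x in Ioi (0:ℝ), Real.exp (-(1/x)) * x ^ (-(m+2)))
      + m * ∫ x in Ioi (0:ℝ), Real.exp (-(1/x)) * x ^ (-(m+1)), ?_, fun r hr => ?_⟩
  · have h1 : (0:ℝ) ≤ ∫ x in Ioi (0:ℝ), Real.exp (-(1/x)) * x ^ (-(m+2)) :=
      setIntegral_nonneg measurableSet_Ioi (fun x hx => by have : (0:ℝ) < x := hx; positivity)
    have h2 : (0:ℝ) ≤ ∫ x in Ioi (0:ℝ), Real.exp (-(1/x)) * x ^ (-(m+1)) :=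
      setIntegral_nonneg measurableSet_Ioi (fun x hx => by have : (0:ℝ) < x := hx; positivity)
    positivity
  have hc : (0:ℝ) < r^2 := by positivity
  have i1 := aux_int hc (show (1:ℝ) < m+2 by linarith)
  have i2 := aux_int hc (show (1:ℝ) < m+1 by linarith)
  refine ⟨(i1.const_mul _).add (i2.const_mul _), ?_⟩
  rw [integral_add (i1.const_mul _) (i2.const_mul _), integral_const_mul, integral_const_mul,
    aux_scale (m+2) hc, aux_scale (m+1) hc]
  have e1 : (r^2:ℝ) ^ (1-(m+2)) = (r^2) ^ (-(m+1)) := by rw [show (1-(m+2)) = -(m+1) by ring]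
  have e2 : (r^2:ℝ) ^ (1-(m+1)) = (r^2) ^ (-m) := by rw [show (1-(m+1)) = -m by ring]
  have e3 : (r^2:ℝ) * (r^2) ^ (-(m+1)) = (r^2) ^ (-m) := by
    rw [show -(m+1) = -m + (-1) by ring, Real.rpow_add hc, Real.rpow_neg_one]
    field_simp
  have e4 : ((r^2:ℝ)) ^ (-m) = (r ^ (2*m))⁻¹ := by
    rw [← Real.rpow_natCast r 2, ← Real.rpow_mul hr.le, ← Real.rpow_neg hr.le]
    congr 1
    push_cast
    ring
  rw [e1, e2, ← mul_assoc, e3, e4]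
  ring

lemma aux_deriv (m r : ℝ) {t : ℝ} (ht : 0 < t) :
    HasDerivAt (fun t : ℝ => Real.exp (-(r^2/t)) * t ^ (-m))
      (r^2 * (Real.exp (-(r^2/t)) * t ^ (-(m+2))) - m * (Real.exp (-(r^2/t)) * t ^ (-(m+1)))) t := by
  have h1 : HasDerivAt (fun t : ℝ => -(r^2/t)) (r^2/t^2) t := by
    have h := ((hasDerivAt_inv ht.ne').const_mul (r^2)).neg
    simp only [mul_neg, neg_neg] at h
    have : (fun x : ℝ => -(r ^ 2 * x⁻¹)) = fun x : ℝ => -(r^2/x) := by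
      funext x; rw [div_eq_mul_inv]
    rw [show (-fun y : ℝ => r ^ 2 * y⁻¹) = fun x : ℝ => -(r^2/x) by rw [← this]; rfl] at h
    exact h.congr_deriv (div_eq_mul_inv _ _).symm
  have h2 := h1.exp
  have h3 := Real.hasDerivAt_rpow_const (p := -m) (Or.inl ht.ne')
  have h4 := h2.mul h3
  refine h4.congr_deriv ?_
  have e2 : t ^ (-(m+2)) = t ^ (-m) * (t^2)⁻¹ := by
    rw [show -(m+2) = -m + (-2:ℝ) by ring, Real.rpow_add ht, Real.rpow_neg ht.le]
    congr 1
    rw [← Real.rpow_natCast t 2, ← Real.rpow_neg ht.le]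
    norm_num
  have e1 : t ^ (-m - 1) = t ^ (-(m+1)) := by ring_nf
  rw [e1, e2]
  have hne : (t:ℝ)^2 ≠ 0 := by positivity
  field_simp
  ring

theorem stmt_2 (m : ℝ) (hm : 0 < m) :
    ∃ C > 0, ∀ (α r : ℝ), α ≠ 0 → 0 < r → ∀ I : ℂ,
      Tendsto (fun T : ℝ =>
          ∫ t in Ioc (0 : ℝ) T,
            Complex.exp (Complex.I * ((α * t : ℝ) : ℂ)) *
              ((Real.exp (-(r ^ 2 / t)) / t ^ m : ℝ) : ℂ))
        atTop (nhds I) →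
      ‖I‖ ≤ C / (|α| * r ^ (2 * m)) := by
  obtain ⟨K, hK0, hKprop⟩ := aux_g m hm
  have hmm : (0:ℝ) < m ^ m := Real.rpow_pos_of_pos hm m
  refine ⟨2 * Real.exp (-m) * m ^ m + K, by positivity, fun α r hα hr I hI => ?_⟩
  set C := 2 * Real.exp (-m) * m ^ m + K with hC
  have hα' : 0 < |α| := abs_pos.mpr hα
  have hr2m : 0 < r ^ (2*m) := Real.rpow_pos_of_pos hr _
  have hr2 : (0:ℝ) < r^2 := by positivity
  set M' := Real.exp (-m) * m ^ m / r ^ (2*m) with hM'def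
  have hM' : 0 < M' := by positivity
  set c : ℂ := Complex.I * (α:ℝ) with hcdef
  have hc : c ≠ 0 := mul_ne_zero Complex.I_ne_zero (Complex.ofReal_ne_zero.mpr hα)
  set F := fun t : ℝ => Complex.exp (Complex.I * ((α * t : ℝ) : ℂ)) *
      ((Real.exp (-(r ^ 2 / t)) / t ^ m : ℝ) : ℂ) with hFdef
  -- sup bound on f
  have hsup : ∀ t : ℝ, 0 < t → Real.exp (-(r^2/t)) * t ^ (-m) ≤ M' := by
    intro t ht
    have h := aux_ptbd hr2 hm ht
    have e4 : ((r^2:ℝ)) ^ m = r ^ (2*m) := by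
      rw [← Real.rpow_natCast r 2, ← Real.rpow_mul hr.le]
      norm_num
    rwa [e4] at h
  -- norm of F
  have hexp1 : ∀ z : ℝ, ‖Complex.exp (Complex.I * (z:ℂ))‖ = 1 := by
    intro z
    rw [show Complex.I * (z:ℂ) = (z:ℂ) * Complex.I by ring,
      Complex.norm_exp_ofReal_mul_I]
  have hFnorm : ∀ t : ℝ, 0 < t → ‖F t‖ ≤ M' := by
    intro t ht
    rw [hFdef, norm_mul, hexp1, one_mul, Complex.norm_real, Real.norm_eq_abs,
      abs_of_nonneg (by positivity)]
    rw [div_eq_mul_inv, ← Real.rpow_neg ht.le]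
    exact hsup t ht
  -- measurability of F
  have hFmeas : Measurable F := by
    apply Measurable.mul
    · exact Complex.measurable_exp.comp (measurable_const.mul
        (Complex.measurable_ofReal.comp (measurable_const.mul measurable_id)))
    · exact Complex.measurable_ofReal.comp
        ((Real.measurable_exp.comp (measurable_const.div measurable_id).neg).div
          (measurable_id.pow_const m))
  have hIntOn : ∀ T : ℝ, IntegrableOn F (Ioc 0 T) := by
    intro T
    refine Integrable.mono' (integrable_const M') hFmeas.aestronglyMeasurable.restrict ?_
    rw [ae_restrict_iff' measurableSet_Ioc]
    filter_upwards with t htm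
    exact hFnorm t htm.1
  obtain ⟨hgint, hgval⟩ := hKprop r hr
  -- the core interval bound
  have hcore : ∀ a T : ℝ, 0 < a → a ≤ T →
      ‖∫ t in Ioc a T, F t‖ ≤ C / (|α| * r ^ (2*m)) := by
    intro a T ha haT
    have huIcc : ∀ x ∈ uIcc a T, (0:ℝ) < x := by
      intro x hx
      rw [uIcc_of_le haT] at hx
      exact lt_of_lt_of_le ha hx.1
    set f := fun t : ℝ => Real.exp (-(r^2/t)) * t ^ (-m) with hfdef
    set f' := fun t : ℝ => r^2 * (Real.exp (-(r^2/t)) * t ^ (-(m+2)))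
        - m * (Real.exp (-(r^2/t)) * t ^ (-(m+1))) with hf'def
    set g := fun t : ℝ => r^2 * (Real.exp (-(r^2/t)) * t ^ (-(m+2)))
        + m * (Real.exp (-(r^2/t)) * t ^ (-(m+1))) with hgdef
    set u := fun t : ℝ => ((f t : ℝ) : ℂ) with hudef
    set u' := fun t : ℝ => ((f' t : ℝ) : ℂ) with hu'def
    set v := fun t : ℝ => Complex.exp (c * t) / c with hvdef
    set v' := fun t : ℝ => Complex.exp (c * t) with hv'def
    have hu : ∀ x ∈ uIcc a T, HasDerivAt u (u' x) x :=
      fun x hx => (aux_deriv m r (huIcc x hx)).ofReal_comp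
    have hv : ∀ x ∈ uIcc a T, HasDerivAt v (v' x) x := by
      intro x hx
      have h := (((hasDerivAt_id (x:ℂ)).const_mul c).cexp).comp_ofReal
      have h2 := h.div_const c
      refine h2.congr_deriv ?_
      simp [hv'def, hc]
    -- continuity facts
    have hcont_pos : ContinuousOn (fun t : ℝ => Real.exp (-(r^2/t))) (uIcc a T) :=
      Real.continuous_exp.comp_continuousOn
        ((continuousOn_const.div continuousOn_id (fun x hx => (huIcc x hx).ne')).neg)
    have hcont_rpow : ∀ s : ℝ, ContinuousOn (fun t : ℝ => t ^ s) (uIcc a T) := by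
      intro s
      apply ContinuousOn.rpow_const continuousOn_id
      exact fun x hx => Or.inl (huIcc x hx).ne'
    have hcont_f' : ContinuousOn f' (uIcc a T) :=
      ((continuousOn_const.mul (hcont_pos.mul (hcont_rpow _)))).sub
        ((continuousOn_const.mul (hcont_pos.mul (hcont_rpow _))))
    have hcont_g : ContinuousOn g (uIcc a T) :=
      ((continuousOn_const.mul (hcont_pos.mul (hcont_rpow _)))).add
        ((continuousOn_const.mul (hcont_pos.mul (hcont_rpow _))))
    have hcont_v : Continuous v :=
      (Complex.continuous_exp.comp (continuous_const.mul Complex.continuous_ofReal)).div_const c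
    have hu'int : IntervalIntegrable u' volume a T :=
      (Complex.continuous_ofReal.comp_continuousOn hcont_f').intervalIntegrable
    have hv'cont : Continuous v' := by
      rw [hv'def]
      exact Complex.continuous_exp.comp (continuous_const.mul Complex.continuous_ofReal)
    have hv'int : IntervalIntegrable v' volume a T := hv'cont.intervalIntegrable a T
    have hIBP := intervalIntegral.integral_mul_deriv_eq_deriv_mul hu hv hu'int hv'int
    have hFeq : EqOn F (fun t => u t * v' t) (uIcc a T) := by
      intro t htm
      have ht := huIcc t htm
      rw [hFdef, hudef, hv'def]
      simp only
      rw [mul_comm]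
      congr 1
      · rw [hfdef]
        push_cast
        rw [Real.rpow_neg ht.le, div_eq_mul_inv]
        push_cast
        ring
      · congr 1
        rw [hcdef]
        push_cast
        ring
    -- norms
    have hnormc : ‖c‖ = |α| := by
      rw [hcdef, norm_mul, Complex.norm_I, one_mul, Complex.norm_real, Real.norm_eq_abs]
    have hnorm_v : ∀ t : ℝ, ‖v t‖ = 1/|α| := by
      intro t
      rw [hvdef]
      simp only
      rw [norm_div, hnormc]
      congr 1
      rw [show c * (t:ℂ) = ((α*t :ℝ):ℂ) * Complex.I by rw [hcdef]; push_cast; ring,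
        Complex.norm_exp_ofReal_mul_I]
    have hnorm_u : ∀ t : ℝ, 0 < t → ‖u t‖ = f t := by
      intro t ht
      rw [hudef]
      simp only
      rw [Complex.norm_real, Real.norm_eq_abs, abs_of_nonneg (by rw [hfdef]; positivity)]
    -- the ∫ |f'| bound
    have hg_le : (∫ x in a..T, g x) ≤ K / r ^ (2*m) := by
      rw [intervalIntegral.integral_of_le haT]
      have hsub : Ioc a T ≤ᵐ[volume] Ioi (0:ℝ) :=
        HasSubset.Subset.eventuallyLE (fun x hx => lt_trans ha hx.1)
      have hg0 : 0 ≤ᵐ[volume.restrict (Ioi (0:ℝ))] g := by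
        filter_upwards [ae_restrict_mem measurableSet_Ioi] with x hx
        have : (0:ℝ) < x := hx
        simp only [Pi.zero_apply, hgdef]
        positivity
      have := setIntegral_mono_set hgint hg0 hsub
      rw [hgval] at this
      rwa [inv_mul_eq_div] at this
    have hIII : ‖∫ x in a..T, u' x * v x‖ ≤ (K / r ^ (2*m)) * (1/|α|) := by
      calc ‖∫ x in a..T, u' x * v x‖ ≤ ∫ x in a..T, ‖u' x * v x‖ :=
            intervalIntegral.norm_integral_le_integral_norm haT
        _ ≤ ∫ x in a..T, g x * (1/|α|) := by
            apply intervalIntegral.integral_mono_on haT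
            · exact ((Complex.continuous_ofReal.comp_continuousOn hcont_f').mul
                hcont_v.continuousOn).norm.intervalIntegrable
            · exact (hcont_g.mul continuousOn_const).intervalIntegrable
            · intro x hx
              have hx0 : (0:ℝ) < x := lt_of_lt_of_le ha hx.1
              rw [norm_mul, hnorm_v, hu'def]
              simp only
              rw [Complex.norm_real, Real.norm_eq_abs]
              apply mul_le_mul_of_nonneg_right _ (by positivity)
              rw [hf'def, hgdef]
              simp only
              have h1 : (0:ℝ) ≤ r^2 * (Real.exp (-(r^2/x)) * x ^ (-(m+2))) := by positivity
              have h2 : (0:ℝ) ≤ m * (Real.exp (-(r^2/x)) * x ^ (-(m+1))) := by positivity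
              rw [abs_sub_le_iff]
              constructor <;> linarith [abs_nonneg (r^2 * (Real.exp (-(r^2/x)) * x ^ (-(m+2))))]
        _ = (∫ x in a..T, g x) * (1/|α|) := by
            rw [intervalIntegral.integral_mul_const]
        _ ≤ (K / r ^ (2*m)) * (1/|α|) :=
            mul_le_mul_of_nonneg_right hg_le (by positivity)
    -- assemble
    rw [← intervalIntegral.integral_of_le haT, intervalIntegral.integral_congr hFeq, hIBP]
    have hT0 : (0:ℝ) < T := lt_of_lt_of_le ha haT
    have hnb : ∀ t : ℝ, 0 < t → ‖u t * v t‖ ≤ M' * (1/|α|) := by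
      intro t ht
      rw [norm_mul, hnorm_u t ht, hnorm_v]
      exact mul_le_mul_of_nonneg_right (hsup t ht) (by positivity)
    calc ‖u T * v T - u a * v a - ∫ x in a..T, u' x * v x‖
        ≤ ‖u T * v T - u a * v a‖ + ‖∫ x in a..T, u' x * v x‖ := norm_sub_le _ _
      _ ≤ ‖u T * v T‖ + ‖u a * v a‖ + ‖∫ x in a..T, u' x * v x‖ := by
          have := norm_sub_le (u T * v T) (u a * v a)
          linarith
      _ ≤ M' * (1/|α|) + M' * (1/|α|) + (K / r ^ (2*m)) * (1/|α|) := by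
          have h1 := hnb T hT0
          have h2 := hnb a ha
          linarith
      _ = C / (|α| * r ^ (2*m)) := by
          rw [hC, hM'def]
          field_simp
          ring
  -- goal bound for every T
  have hallT : ∀ T : ℝ, ‖∫ t in Ioc (0:ℝ) T, F t‖ ≤ C / (|α| * r ^ (2*m)) := by
    intro T
    rcases le_or_gt T 0 with hT | hT
    · rw [Set.Ioc_eq_empty (not_lt.mpr hT)]
      simp only [Measure.restrict_empty, integral_zero_measure, norm_zero]
      positivity
    · -- split at a and let a → 0
      apply le_of_forall_pos_le_add
      intro ε hε
      set a := min T (ε / M') with hadef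
      have ha0 : 0 < a := lt_min hT (by positivity)
      have haT : a ≤ T := min_le_left _ _
      have hsplit : (∫ t in Ioc (0:ℝ) T, F t)
          = (∫ t in Ioc (0:ℝ) a, F t) + ∫ t in Ioc a T, F t := by
        rw [← setIntegral_union (Set.Ioc_disjoint_Ioc_of_le le_rfl) measurableSet_Ioc
          ((hIntOn T).mono_set (Set.Ioc_subset_Ioc_right haT))
          ((hIntOn T).mono_set (Set.Ioc_subset_Ioc_left ha0.le)),
          Set.Ioc_union_Ioc_eq_Ioc ha0.le haT]
      have hsmall : ‖∫ t in Ioc (0:ℝ) a, F t‖ ≤ M' * a := by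
        have h := norm_setIntegral_le_of_norm_le_const (μ := volume) (s := Ioc (0:ℝ) a)
          (f := F) (C := M')
          (by rw [Real.volume_Ioc]; exact ENNReal.ofReal_lt_top)
          (fun x hx => hFnorm x hx.1)
        rw [Real.volume_real_Ioc_of_le ha0.le] at h
        simpa using h
      have hMa : M' * a ≤ ε := by
        have : a ≤ ε / M' := min_le_right _ _
        calc M' * a ≤ M' * (ε / M') := by gcongr
          _ = ε := by field_simp
      calc ‖∫ t in Ioc (0:ℝ) T, F t‖
          ≤ ‖∫ t in Ioc (0:ℝ) a, F t‖ + ‖∫ t in Ioc a T, F t‖ := by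
            rw [hsplit]; exact norm_add_le _ _
        _ ≤ M' * a + C / (|α| * r ^ (2*m)) := add_le_add hsmall (hcore a T ha0 haT)
        _ ≤ C / (|α| * r ^ (2*m)) + ε := by linarith
  exact le_of_tendsto' hI.norm hallT
end

section
/- Let α ∈ ℝ \ {0}, m > 0, and r > 0. Then there is a constant C = C(m), independent of r and α, such that |∫₀^∞ e^{iαt} e^{-r²/t} t^{-m} dt| ≤ C / (|α|^{1/(m+1)} r^{2m²/(m+1)}). -/
open MeasureTheory Set Filter

-- sup_{u>0} u^m e^{-u} bound
lemma aux_rpow_exp_le (m : ℝ) (hm : 0 < m) :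
    ∃ Cm > 0, ∀ u : ℝ, 0 < u → u ^ m * Real.exp (-u) ≤ Cm := by
  refine ⟨((Nat.ceil m).factorial : ℝ) + 1, by positivity, fun u hu => ?_⟩
  rcases le_total u 1 with h | h
  · have h1 : u ^ m ≤ 1 := Real.rpow_le_one hu.le h hm.le
    have h2 : Real.exp (-u) ≤ 1 := Real.exp_le_one_iff.mpr (by linarith)
    have h3 : (0:ℝ) ≤ ((Nat.ceil m).factorial : ℝ) := Nat.cast_nonneg _
    nlinarith [Real.exp_pos (-u), (Real.rpow_pos_of_pos hu m)]
  · set n := Nat.ceil m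
    have h1 : u ^ m ≤ u ^ (n : ℝ) := Real.rpow_le_rpow_of_exponent_le h (Nat.le_ceil m)
    have h2 : u ^ (n : ℝ) = u ^ n := Real.rpow_natCast u n
    have h3 : u ^ n / (n.factorial : ℝ) ≤ Real.exp u := by
      calc u ^ n / (n.factorial : ℝ) ≤ ∑ i ∈ Finset.range (n+1), u ^ i / (i.factorial : ℝ) := by
            refine Finset.single_le_sum (f := fun i => u ^ i / ((i.factorial : ℝ) : ℝ)) ?_ ?_
            · intro i _; positivity
            · simp
        _ ≤ Real.exp u := Real.sum_le_exp_of_nonneg (by linarith) _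
    have h4 : u ^ n * Real.exp (-u) ≤ (n.factorial : ℝ) := by
      rw [Real.exp_neg]
      rw [div_le_iff₀ (by positivity)] at h3
      have hexp := Real.exp_pos u
      rw [mul_inv_le_iff₀ hexp]
      linarith
    have := Real.exp_pos (-u)
    calc u ^ m * Real.exp (-u) ≤ u ^ n * Real.exp (-u) := by
          rw [← h2]; exact mul_le_mul_of_nonneg_right h1 this.le
      _ ≤ (n.factorial : ℝ) := h4
      _ ≤ (n.factorial : ℝ) + 1 := by linarith

-- derivative of φ t = exp(-(r^2/t)) / t^m at t > 0
lemma aux_hasDerivAt (m r : ℝ) (t : ℝ) (ht : 0 < t) :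
    HasDerivAt (fun t : ℝ => Real.exp (-(r ^ 2 / t)) / t ^ m)
      (Real.exp (-(r ^ 2 / t)) * (r ^ 2 / t ^ 2) * t ^ (-m)
        - m * (Real.exp (-(r ^ 2 / t)) * t ^ (-(m + 1)))) t := by
  have h1 : HasDerivAt (fun t : ℝ => -(r ^ 2 / t)) (r ^ 2 / t ^ 2) t := by
    have := (hasDerivAt_inv ht.ne').const_mul (r ^ 2)
    simp only [div_eq_mul_inv]
    refine this.neg.congr_deriv ?_
    ring
  have h2 : HasDerivAt (fun t : ℝ => Real.exp (-(r ^ 2 / t)))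
      (Real.exp (-(r ^ 2 / t)) * (r ^ 2 / t ^ 2)) t := h1.exp
  have h3 : HasDerivAt (fun t : ℝ => t ^ m) (m * t ^ (m - 1)) t :=
    Real.hasDerivAt_rpow_const (Or.inl ht.ne')
  have hne : t ^ m ≠ 0 := (Real.rpow_pos_of_pos ht m).ne'
  have := h2.div h3 hne
  refine this.congr_deriv ?_
  have e1 : t ^ (-m) = (t ^ m)⁻¹ := Real.rpow_neg ht.le m ▸ by rw [Real.rpow_neg ht.le]
  have e2 : t ^ (m - 1) = t ^ m / t := by rw [Real.rpow_sub ht, Real.rpow_one]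
  have e3 : t ^ (-(m + 1)) = (t ^ m * t)⁻¹ := by
    rw [Real.rpow_neg ht.le, Real.rpow_add ht, Real.rpow_one]
  rw [e1, e2, e3]
  field_simp

lemma aux_deriv_bound (m r : ℝ) (hm : 0 < m) (t : ℝ) (ht : 0 < t) :
    |Real.exp (-(r ^ 2 / t)) * (r ^ 2 / t ^ 2) * t ^ (-m)
        - m * (Real.exp (-(r ^ 2 / t)) * t ^ (-(m + 1)))|
      ≤ (1 + m) * t ^ (-(m + 1)) := by
  set u : ℝ := r ^ 2 / t with hu
  have hu0 : 0 ≤ u := by positivity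
  have hA : Real.exp (-u) * u ≤ 1 := by
    rw [Real.exp_neg, inv_mul_le_iff₀ (Real.exp_pos u), mul_one]
    nlinarith [Real.add_one_le_exp u]
  have htm : (0:ℝ) < t ^ (-m) := Real.rpow_pos_of_pos ht _
  have htm1 : (0:ℝ) < t ^ (-(m+1)) := Real.rpow_pos_of_pos ht _
  have hexp : (0:ℝ) < Real.exp (-u) := Real.exp_pos _
  have key : t ^ (-(m+1)) = t ^ (-m) * t⁻¹ := by
    rw [← Real.rpow_neg_one t, ← Real.rpow_add ht]; ring_nf
  have h1 : Real.exp (-u) * (r ^ 2 / t ^ 2) * t ^ (-m) ≤ t ^ (-(m + 1)) := by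
    have hsplit : r ^ 2 / t ^ 2 = u * t⁻¹ := by rw [hu]; ring
    rw [hsplit, key]
    calc Real.exp (-u) * (u * t⁻¹) * t ^ (-m)
        = (Real.exp (-u) * u) * (t ^ (-m) * t⁻¹) := by ring
      _ ≤ 1 * (t ^ (-m) * t⁻¹) := by
          apply mul_le_mul_of_nonneg_right hA
          positivity
      _ = t ^ (-m) * t⁻¹ := one_mul _
  have h2 : m * (Real.exp (-u) * t ^ (-(m+1))) ≤ m * t ^ (-(m+1)) := by
    have hle : Real.exp (-u) ≤ 1 := Real.exp_le_one_iff.mpr (by linarith)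
    have := mul_le_mul_of_nonneg_right hle htm1.le
    rw [one_mul] at this
    nlinarith
  rw [abs_sub_le_iff]
  constructor
  · have : (0:ℝ) ≤ m * (Real.exp (-u) * t ^ (-(m+1))) := by positivity
    nlinarith
  · have : (0:ℝ) ≤ Real.exp (-u) * (r ^ 2 / t ^ 2) * t ^ (-m) := by positivity
    nlinarith

lemma aux_phi_bound (m r Cm : ℝ) (hr : 0 < r)
    (hCm : ∀ u : ℝ, 0 < u → u ^ m * Real.exp (-u) ≤ Cm)
    (t : ℝ) (ht : 0 < t) :
    Real.exp (-(r ^ 2 / t)) / t ^ m ≤ Cm / (r ^ 2 : ℝ) ^ m := by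
  set u : ℝ := r ^ 2 / t with hu
  have hu0 : 0 < u := by positivity
  have h1 := hCm u hu0
  have h2 : u ^ m = (r ^ 2 : ℝ) ^ m / t ^ m := Real.div_rpow (by positivity) ht.le m
  have htm : (0:ℝ) < t ^ m := Real.rpow_pos_of_pos ht _
  have hrm : (0:ℝ) < (r ^ 2 : ℝ) ^ m := Real.rpow_pos_of_pos (by positivity) _
  rw [h2] at h1
  rw [div_le_div_iff₀ htm hrm]
  calc Real.exp (-u) * (r^2:ℝ)^m = ((r^2:ℝ)^m / t^m * Real.exp (-u)) * t ^ m := by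
        rw [hu]; field_simp
    _ ≤ Cm * t ^ m := mul_le_mul_of_nonneg_right h1 htm.le

lemma aux_phi_bound' (m r : ℝ) (t : ℝ) (ht : 0 < t) :
    Real.exp (-(r ^ 2 / t)) / t ^ m ≤ t ^ (-m) := by
  have htm : (0:ℝ) < t ^ m := Real.rpow_pos_of_pos ht _
  have h : Real.exp (-(r^2/t)) ≤ 1 := Real.exp_le_one_iff.mpr (neg_nonpos.mpr (by positivity))
  rw [Real.rpow_neg ht.le, div_le_iff₀ htm, inv_mul_cancel₀ htm.ne']
  exact h

lemma aux_alg (m β r : ℝ) (hm : 0 < m) (hβ : 0 < β) (hr : 0 < r) :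
    (r ^ (2*m/(m+1)) * β ^ (-(1/(m+1)))) / (r^2 : ℝ) ^ m
      = 1 / (β ^ (1/(m+1)) * r ^ (2*m^2/(m+1))) ∧
    (r ^ (2*m/(m+1)) * β ^ (-(1/(m+1)))) ^ (-m) / β
      = 1 / (β ^ (1/(m+1)) * r ^ (2*m^2/(m+1))) := by
  have hm1 : m + 1 > 0 := by linarith
  have h2m : (r^2:ℝ)^m = r ^ (2*m) := by
    rw [← Real.rpow_natCast r 2, ← Real.rpow_mul hr.le]
    norm_num
  have hRHS : 1 / (β ^ (1/(m+1)) * r ^ (2*m^2/(m+1)))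
      = r ^ (-(2*m^2/(m+1))) * β ^ (-(1/(m+1))) := by
    rw [one_div, mul_inv, ← Real.rpow_neg hβ.le, ← Real.rpow_neg hr.le]
    ring
  have hexp1 : 2*m/(m+1) - 2*m = -(2*m^2/(m+1)) := by field_simp; ring
  have hexp2 : (2*m/(m+1)) * (-m) = -(2*m^2/(m+1)) := by rw [div_mul_eq_mul_div, ← neg_div]; ring_nf
  have hexp3 : (-(1/(m+1))) * (-m) + (-1) = -(1/(m+1)) := by field_simp; ring
  constructor
  · rw [hRHS, h2m]
    rw [show r ^ (2*m/(m+1)) * β ^ (-(1/(m+1))) / r ^ (2*m)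
        = (r ^ (2*m/(m+1)) / r ^ (2*m)) * β ^ (-(1/(m+1))) by ring]
    rw [← Real.rpow_sub hr, hexp1]
  · rw [hRHS, Real.mul_rpow (by positivity) (by positivity),
      ← Real.rpow_mul hr.le, ← Real.rpow_mul hβ.le, hexp2, div_eq_mul_inv,
      ← Real.rpow_neg_one β, mul_assoc, ← Real.rpow_add hβ, hexp3]

set_option maxHeartbeats 1000000 in
theorem stmt_3 (m : ℝ) (hm : 0 < m) :
    ∃ C > 0, ∀ (α r : ℝ), α ≠ 0 → 0 < r → ∀ I : ℂ,
      Tendsto (fun T : ℝ =>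
          ∫ t in Ioc (0 : ℝ) T,
            Complex.exp (Complex.I * ((α * t : ℝ) : ℂ)) *
              ((Real.exp (-(r ^ 2 / t)) / t ^ m : ℝ) : ℂ))
        atTop (nhds I) →
      ‖I‖ ≤ C / (|α| ^ (1 / (m + 1)) * r ^ (2 * m ^ 2 / (m + 1))) := by
  obtain ⟨Cm, hCm0, hCm⟩ := aux_rpow_exp_le m hm
  refine ⟨Cm + 1 + (1 + m) / m, by positivity, ?_⟩
  intro α r hα hr I hI
  set g : ℝ → ℂ := fun t =>
    Complex.exp (Complex.I * ((α * t : ℝ) : ℂ)) *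
      ((Real.exp (-(r ^ 2 / t)) / t ^ m : ℝ) : ℂ) with hgdef
  set β := |α| with hβdef
  have hβ : 0 < β := abs_pos.mpr hα
  set D : ℝ := 1 / (β ^ (1 / (m + 1)) * r ^ (2 * m ^ 2 / (m + 1))) with hD
  have hD0 : 0 < D := by positivity
  set l : ℝ := r ^ (2 * m / (m + 1)) * β ^ (-(1 / (m + 1))) with hldef
  have hl0 : 0 < l := by positivity
  obtain ⟨hA, hB⟩ := aux_alg m β r hm hβ hr
  rw [← hldef, ← hD] at hA hB
  set c : ℂ := Complex.I * (α : ℂ) with hcdef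
  have hc : c ≠ 0 := mul_ne_zero Complex.I_ne_zero (Complex.ofReal_ne_zero.mpr hα)
  have hnorm_exp : ∀ t : ℝ, ‖Complex.exp (c * t)‖ = 1 := by
    intro t
    rw [Complex.norm_exp]
    simp [hcdef, Complex.mul_re]
  have hc_norm : ‖c‖ = β := by
    rw [hcdef, norm_mul, Complex.norm_I,
      Complex.norm_real, one_mul, Real.norm_eq_abs, hβdef]
  have hu_deriv : ∀ t : ℝ, HasDerivAt (fun t : ℝ => Complex.exp (c * t) / c)
      (Complex.exp (c * t)) t := by
    intro t
    have h0 : HasDerivAt (fun t : ℝ => c * (t : ℂ)) c t := by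
      simpa using (Complex.ofRealCLM.hasDerivAt (x := t)).const_mul c
    have h1 := (h0.cexp).div_const c
    simpa [mul_div_cancel_right₀ _ hc] using h1
  have hu_norm : ∀ t : ℝ, ‖Complex.exp (c * t) / c‖ = 1 / β := by
    intro t; rw [norm_div, hnorm_exp, hc_norm]
  -- abbreviations
  set φ : ℝ → ℝ := fun t => Real.exp (-(r ^ 2 / t)) / t ^ m with hφdef
  set E : ℝ → ℝ := fun t => Real.exp (-(r ^ 2 / t)) * (r ^ 2 / t ^ 2) * t ^ (-m)
      - m * (Real.exp (-(r ^ 2 / t)) * t ^ (-(m + 1))) with hEdef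
  set u : ℝ → ℂ := fun t => Complex.exp (c * t) / c with hudef
  set v : ℝ → ℂ := fun t => ((φ t : ℝ) : ℂ) with hvdef
  have hφ_nonneg : ∀ t : ℝ, 0 < t → 0 ≤ φ t := by
    intro t ht
    have := Real.rpow_pos_of_pos ht m
    positivity
  have hgnorm : ∀ t : ℝ, 0 < t → ‖g t‖ = φ t := by
    intro t ht
    rw [hgdef]
    simp only [norm_mul]
    have h1 : ‖Complex.exp (Complex.I * ((α * t : ℝ) : ℂ))‖ = 1 := by
      have : Complex.I * ((α * t : ℝ) : ℂ) = c * t := by rw [hcdef]; push_cast; ring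
      rw [this]; exact hnorm_exp t
    rw [h1, one_mul, Complex.norm_real, Real.norm_eq_abs, abs_of_nonneg (hφ_nonneg t ht)]
  have hgeq : ∀ t : ℝ, g t = v t * Complex.exp (c * t) := by
    intro t
    have harg : Complex.I * ((α * t : ℝ) : ℂ) = c * t := by rw [hcdef]; push_cast; ring
    show Complex.exp (Complex.I * ((α * t : ℝ) : ℂ)) * ((φ t : ℝ) : ℂ) = _
    rw [harg, mul_comm]
  -- global bound on ‖g‖
  have hgbound : ∀ t : ℝ, 0 < t → ‖g t‖ ≤ Cm / (r ^ 2 : ℝ) ^ m := by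
    intro t ht
    rw [hgnorm t ht]
    exact aux_phi_bound m r Cm hr hCm t ht
  -- integrability of g on Ioc a b with 0 ≤ a
  have hint : ∀ a b : ℝ, 0 ≤ a → IntegrableOn g (Ioc a b) := by
    intro a b ha
    have hmeas : Measurable g := by rw [hgdef]; fun_prop
    refine Integrable.mono' (g := fun _ => Cm / (r ^ 2 : ℝ) ^ m)
      (integrableOn_const measure_Ioc_lt_top.ne)
      hmeas.aestronglyMeasurable.restrict ?_
    rw [ae_restrict_iff' measurableSet_Ioc]
    exact Eventually.of_forall fun t ht => hgbound t (lt_of_le_of_lt ha ht.1)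
  -- part 1
  have hpart1 : ‖∫ t in Ioc (0:ℝ) l, g t‖ ≤ Cm * D := by
    have h := norm_setIntegral_le_of_norm_le_const (μ := volume) (s := Ioc (0:ℝ) l)
      (f := g) (C := Cm / (r ^ 2 : ℝ) ^ m) measure_Ioc_lt_top
      (fun t ht => hgbound t ht.1)
    rw [Real.volume_real_Ioc_of_le (by linarith)] at h
    calc ‖∫ t in Ioc (0:ℝ) l, g t‖ ≤ Cm / (r ^ 2 : ℝ) ^ m * (l - 0) := h
      _ = Cm * (l / (r ^ 2 : ℝ) ^ m) := by ring
      _ = Cm * D := by rw [hA]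
  -- main estimate for T ≥ l
  have hmain : ∀ T : ℝ, l ≤ T →
      ‖∫ t in Ioc (0:ℝ) T, g t‖ ≤ (Cm + 1 + (1 + m) / m) * D + T ^ (-m) / β := by
    intro T hT
    have hT0 : 0 < T := lt_of_lt_of_le hl0 hT
    have hrpow_cont : ∀ p : ℝ, ContinuousOn (fun t : ℝ => t ^ p) (Icc l T) := by
      intro p t ht
      exact (Real.continuousAt_rpow_const t p
        (Or.inl (ne_of_gt (lt_of_lt_of_le hl0 ht.1)))).continuousWithinAt
    have hexp_cont : ContinuousOn (fun t : ℝ => Real.exp (-(r ^ 2 / t))) (Icc l T) := by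
      apply ContinuousOn.rexp
      apply ContinuousOn.neg
      exact ContinuousOn.div continuousOn_const continuousOn_id
        (fun t ht => ne_of_gt (lt_of_lt_of_le hl0 ht.1))
    have hE_cont : ContinuousOn E (Icc l T) := by
      rw [hEdef]
      apply ContinuousOn.sub
      · exact (hexp_cont.mul (continuousOn_const.div ((continuous_pow 2).continuousOn)
          (fun t ht => pow_ne_zero 2 (ne_of_gt (lt_of_lt_of_le hl0 ht.1))))).mul
          (hrpow_cont (-m))
      · exact continuousOn_const.mul (hexp_cont.mul (hrpow_cont (-(m + 1))))
    have hu_cont : Continuous u := by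
      rw [hudef]
      exact (Complex.continuous_exp.comp
        (continuous_const.mul Complex.continuous_ofReal)).div_const c
    have huIcc : uIcc l T = Icc l T := uIcc_of_le hT
    have hvderiv : ∀ x ∈ uIcc l T, HasDerivAt v ((E x : ℝ) : ℂ) x := by
      intro x hx
      rw [huIcc] at hx
      exact ((aux_hasDerivAt m r x (lt_of_lt_of_le hl0 hx.1)).ofReal_comp)
    have huderiv : ∀ x ∈ uIcc l T, HasDerivAt u (Complex.exp (c * x)) x :=
      fun x _ => hu_deriv x
    have hu'int : IntervalIntegrable (fun x : ℝ => Complex.exp (c * x)) volume l T :=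
      (Complex.continuous_exp.comp
        (continuous_const.mul Complex.continuous_ofReal)).intervalIntegrable l T
    have hv'int : IntervalIntegrable (fun x : ℝ => ((E x : ℝ) : ℂ)) volume l T := by
      apply ContinuousOn.intervalIntegrable
      rw [huIcc]
      exact Complex.continuous_ofReal.comp_continuousOn hE_cont
    have hparts := intervalIntegral.integral_mul_deriv_eq_deriv_mul hvderiv huderiv hv'int hu'int
    have hsplit : ∫ t in Ioc (0:ℝ) T, g t
        = (∫ t in Ioc (0:ℝ) l, g t) + ∫ t in Ioc l T, g t := by
      rw [← setIntegral_union (Ioc_disjoint_Ioc_of_le le_rfl) measurableSet_Ioc (hint 0 l le_rfl)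
        (hint l T hl0.le), Ioc_union_Ioc_eq_Ioc hl0.le hT]
    have hIoc : ∫ t in Ioc l T, g t = ∫ t in l..T, g t :=
      (intervalIntegral.integral_of_le hT).symm
    have hg_int_eq : ∫ t in l..T, g t
        = v T * u T - v l * u l - ∫ x in l..T, ((E x : ℝ) : ℂ) * u x := by
      rw [← hparts]
      apply intervalIntegral.integral_congr
      intro x _
      exact hgeq x
    have hv_norm_le : ∀ t : ℝ, 0 < t → ‖v t‖ ≤ t ^ (-m) := by
      intro t ht
      show ‖((φ t : ℝ) : ℂ)‖ ≤ t ^ (-m)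
      rw [Complex.norm_real, Real.norm_eq_abs, abs_of_nonneg (hφ_nonneg t ht)]
      exact aux_phi_bound' m r t ht
    have hEu : ‖∫ x in l..T, ((E x : ℝ) : ℂ) * u x‖ ≤ ((1 + m) / m) * D := by
      have h1 : ‖∫ x in l..T, ((E x : ℝ) : ℂ) * u x‖
          ≤ ∫ x in l..T, ‖((E x : ℝ) : ℂ) * u x‖ :=
        intervalIntegral.norm_integral_le_integral_norm hT
      have h2 : (∫ x in l..T, ‖((E x : ℝ) : ℂ) * u x‖)
          ≤ ∫ x in l..T, ((1 + m) / β) * x ^ (-(m + 1)) := by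
        apply intervalIntegral.integral_mono_on hT
        · apply ContinuousOn.intervalIntegrable
          rw [huIcc]
          exact ((Complex.continuous_ofReal.comp_continuousOn hE_cont).mul
            hu_cont.continuousOn).norm
        · apply ContinuousOn.intervalIntegrable
          rw [huIcc]
          exact continuousOn_const.mul (hrpow_cont (-(m + 1)))
        · intro x hx
          have hx0 : 0 < x := lt_of_lt_of_le hl0 hx.1
          rw [norm_mul, Complex.norm_real, Real.norm_eq_abs, hu_norm x]
          calc |E x| * (1 / β) ≤ ((1 + m) * x ^ (-(m + 1))) * (1 / β) :=
                mul_le_mul_of_nonneg_right (aux_deriv_bound m r hm x hx0) (by positivity)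
            _ = ((1 + m) / β) * x ^ (-(m + 1)) := by ring
      have h3 : (∫ x in l..T, ((1 + m) / β) * x ^ (-(m + 1)))
          = ((1 + m) / β) * ∫ x in l..T, x ^ (-(m + 1)) :=
        intervalIntegral.integral_const_mul _ _
      have h4 : (∫ x in l..T, x ^ (-(m + 1)))
          = (T ^ (-(m + 1) + 1) - l ^ (-(m + 1) + 1)) / (-(m + 1) + 1) := by
        refine integral_rpow (Or.inr ⟨?_, notMem_uIcc_of_lt hl0 hT0⟩)
        intro h
        nlinarith
      have hTm : 0 < T ^ (-m) := Real.rpow_pos_of_pos hT0 _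
      have h5 : (∫ x in l..T, x ^ (-(m + 1))) ≤ l ^ (-m) / m := by
        rw [h4, show (-(m + 1) + 1 : ℝ) = -m by ring]
        have heq : (T ^ (-m) - l ^ (-m)) / (-m) = (l ^ (-m) - T ^ (-m)) / m := by
          rw [div_neg, ← neg_div]
          congr 1
          ring
        rw [heq]
        gcongr
        linarith
      have h6 : ((1 + m) / β) * (l ^ (-m) / m) = ((1 + m) / m) * D := by
        rw [← hB]
        field_simp
      calc ‖∫ x in l..T, ((E x : ℝ) : ℂ) * u x‖
          ≤ ∫ x in l..T, ((1 + m) / β) * x ^ (-(m + 1)) := le_trans h1 h2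
        _ = ((1 + m) / β) * ∫ x in l..T, x ^ (-(m + 1)) := h3
        _ ≤ ((1 + m) / β) * (l ^ (-m) / m) := by
            apply mul_le_mul_of_nonneg_left h5 (by positivity)
        _ = ((1 + m) / m) * D := h6
    have hpart2 : ‖∫ t in Ioc l T, g t‖ ≤ (1 + (1 + m) / m) * D + T ^ (-m) / β := by
      rw [hIoc, hg_int_eq]
      have e1 : ‖v T * u T‖ ≤ T ^ (-m) / β := by
        rw [norm_mul, hu_norm]
        calc ‖v T‖ * (1 / β) ≤ T ^ (-m) * (1 / β) :=
              mul_le_mul_of_nonneg_right (hv_norm_le T hT0) (by positivity)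
          _ = T ^ (-m) / β := by ring
      have e2 : ‖v l * u l‖ ≤ D := by
        rw [norm_mul, hu_norm]
        calc ‖v l‖ * (1 / β) ≤ l ^ (-m) * (1 / β) :=
              mul_le_mul_of_nonneg_right (hv_norm_le l hl0) (by positivity)
          _ = l ^ (-m) / β := by ring
          _ = D := hB
      calc ‖v T * u T - v l * u l - ∫ x in l..T, ((E x : ℝ) : ℂ) * u x‖
          ≤ ‖v T * u T - v l * u l‖ + ‖∫ x in l..T, ((E x : ℝ) : ℂ) * u x‖ :=
            norm_sub_le _ _
        _ ≤ (‖v T * u T‖ + ‖v l * u l‖) + ‖∫ x in l..T, ((E x : ℝ) : ℂ) * u x‖ := by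
            have := norm_sub_le (v T * u T) (v l * u l)
            linarith
        _ ≤ (T ^ (-m) / β + D) + ((1 + m) / m) * D := by
            have := hEu; linarith
        _ = (1 + (1 + m) / m) * D + T ^ (-m) / β := by ring
    calc ‖∫ t in Ioc (0:ℝ) T, g t‖
        = ‖(∫ t in Ioc (0:ℝ) l, g t) + ∫ t in Ioc l T, g t‖ := by rw [hsplit]
      _ ≤ ‖∫ t in Ioc (0:ℝ) l, g t‖ + ‖∫ t in Ioc l T, g t‖ := norm_add_le _ _
      _ ≤ Cm * D + ((1 + (1 + m) / m) * D + T ^ (-m) / β) := add_le_add hpart1 hpart2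
      _ = (Cm + 1 + (1 + m) / m) * D + T ^ (-m) / β := by ring
  have hfinal : ‖I‖ ≤ (Cm + 1 + (1 + m) / m) * D := by
    apply le_of_forall_pos_le_add
    intro ε hε
    have h1 : Tendsto (fun T : ℝ => T ^ (-m) / β) atTop (nhds 0) := by
      simpa using (tendsto_rpow_neg_atTop hm).div_const β
    have h2 : ∀ᶠ T in atTop, T ^ (-m) / β < ε := h1.eventually (gt_mem_nhds hε)
    have h4 : ∀ᶠ T in atTop,
        ‖∫ t in Ioc (0:ℝ) T, g t‖ ≤ (Cm + 1 + (1 + m) / m) * D + ε := by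
      filter_upwards [h2, eventually_ge_atTop l] with T hT2 hT3
      exact le_trans (hmain T hT3) (by linarith)
    exact le_of_tendsto hI.norm h4
  calc ‖I‖ ≤ (Cm + 1 + (1 + m) / m) * D := hfinal
    _ = (Cm + 1 + (1 + m) / m) / (β ^ (1 / (m + 1)) * r ^ (2 * m ^ 2 / (m + 1))) := by
        rw [hD, mul_one_div]
end

section
/- Let α ∈ ℝ \ {0}, m > 0, and r > 0. Then there is a constant C = C(m) such that |∫₀^∞ e^{iαt} e^{-r²/t} t^{-m} dt| ≤ C · min{ 1/(|α| r^{2m}), 1/(|α|^{1/(m+1)} r^{2m²/(m+1)}) }. -/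
open MeasureTheory Set Filter


noncomputable def gg (m r t : ℝ) : ℝ := Real.exp (-(r ^ 2 / t)) / t ^ m

noncomputable def gd (m r t : ℝ) : ℝ :=
  Real.exp (-(r ^ 2 / t)) * (r ^ 2 - m * t) / t ^ (m + 2)

lemma gg_nonneg (m r : ℝ) {t : ℝ} (ht : 0 < t) : 0 ≤ gg m r t :=
  div_nonneg (Real.exp_nonneg _) (Real.rpow_nonneg ht.le _)

lemma hasDerivAt_gg (m r : ℝ) {t : ℝ} (ht : 0 < t) :
    HasDerivAt (gg m r) (gd m r t) t := by
  have h1 : HasDerivAt (fun t : ℝ => -(r ^ 2 / t)) (r ^ 2 / t ^ 2) t := by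
    have h0 : HasDerivAt (fun t : ℝ => r ^ 2 / t) (-(r ^ 2 / t ^ 2)) t := by
      simpa [div_eq_mul_inv, mul_comm, neg_mul, mul_neg] using
        (hasDerivAt_inv ht.ne').const_mul (r ^ 2)
    simpa using h0.fun_neg
  have h2 := h1.exp
  have h3 : HasDerivAt (fun t : ℝ => t ^ m) (m * t ^ (m - 1)) t :=
    Real.hasDerivAt_rpow_const (Or.inl ht.ne')
  have hP : (0:ℝ) < t ^ m := Real.rpow_pos_of_pos ht m
  have h4 := h2.fun_div h3 hP.ne'
  refine (h4.congr_deriv ?_ : HasDerivAt (gg m r) _ t)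
  symm
  have e1 : t ^ (m + 2) = t ^ m * t ^ 2 := by
    rw [Real.rpow_add ht, Real.rpow_two]
  have e2 : t ^ (m - 1) = t ^ m / t := by
    rw [Real.rpow_sub ht, Real.rpow_one]
  rw [gd, e1, e2]
  have ht2 : (t:ℝ)^2 ≠ 0 := pow_ne_zero 2 ht.ne'
  field_simp

lemma continuousOn_gd (m r : ℝ) : ContinuousOn (gd m r) (Ioi 0) := by
  apply ContinuousOn.div
  · apply ContinuousOn.mul
    · exact Real.continuous_exp.comp_continuousOn
        ((continuousOn_const.div continuousOn_id fun t ht => ne_of_gt ht).neg)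
    · exact (continuous_const.sub (continuous_const.mul continuous_id)).continuousOn
  · exact fun t ht => (Real.continuousAt_rpow_const t (m+2) (Or.inl (ne_of_gt ht))).continuousWithinAt
  · exact fun t ht => (Real.rpow_pos_of_pos ht _).ne'

lemma gd_nonneg (m r : ℝ) (hm : 0 < m) {t : ℝ} (ht : 0 < t) (h : t ≤ r^2/m) :
    0 ≤ gd m r t := by
  apply div_nonneg _ (Real.rpow_nonneg ht.le _)
  apply mul_nonneg (Real.exp_nonneg _)
  rw [le_div_iff₀ hm] at h
  linarith [h]

lemma gd_nonpos (m r : ℝ) (hm : 0 < m) {t : ℝ} (ht : 0 < t) (h : r^2/m ≤ t) :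
    gd m r t ≤ 0 := by
  apply div_nonpos_of_nonpos_of_nonneg _ (Real.rpow_nonneg ht.le _)
  apply mul_nonpos_of_nonneg_of_nonpos (Real.exp_nonneg _)
  rw [div_le_iff₀ hm] at h
  linarith [h]

lemma intInt_gd (m r : ℝ) {a b : ℝ} (ha : 0 < a) (hab : a ≤ b) :
    IntervalIntegrable (gd m r) volume a b := by
  apply ContinuousOn.intervalIntegrable
  apply (continuousOn_gd m r).mono
  rw [uIcc_of_le hab]
  exact fun t ht => lt_of_lt_of_le ha ht.1

lemma intInt_abs_gd (m r : ℝ) {a b : ℝ} (ha : 0 < a) (hab : a ≤ b) :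
    IntervalIntegrable (fun t => |gd m r t|) volume a b :=
  (intInt_gd m r ha hab).abs

lemma integral_gd (m r : ℝ) {a b : ℝ} (ha : 0 < a) (hab : a ≤ b) :
    ∫ t in a..b, gd m r t = gg m r b - gg m r a := by
  apply intervalIntegral.integral_eq_sub_of_hasDerivAt
  · intro t htmem
    rw [uIcc_of_le hab] at htmem
    exact hasDerivAt_gg m r (lt_of_lt_of_le ha htmem.1)
  · exact intInt_gd m r ha hab

lemma integral_abs_gd (m r : ℝ) (hm : 0 < m) {a b : ℝ} (ha : 0 < a) (hab : a ≤ b) :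
    ∫ t in a..b, |gd m r t| =
      2 * gg m r (max a (min b (r^2/m))) - gg m r a - gg m r b := by
  set t0 := r^2/m with ht0
  rcases le_total b t0 with hb | hb
  · have hmin : min b t0 = b := min_eq_left hb
    have hmax : max a b = b := max_eq_right hab
    rw [hmin, hmax]
    have : ∫ t in a..b, |gd m r t| = ∫ t in a..b, gd m r t := by
      apply intervalIntegral.integral_congr
      intro t htmem
      rw [uIcc_of_le hab] at htmem
      exact abs_of_nonneg (gd_nonneg m r hm (lt_of_lt_of_le ha htmem.1) (le_trans htmem.2 hb))
    rw [this, integral_gd m r ha hab]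
    ring
  · rcases le_total t0 a with ha' | ha'
    · have hmin : min b t0 = t0 := min_eq_right hb
      have hmax : max a t0 = a := max_eq_left ha'
      rw [hmin, hmax]
      have : ∫ t in a..b, |gd m r t| = ∫ t in a..b, -gd m r t := by
        apply intervalIntegral.integral_congr
        intro t htmem
        rw [uIcc_of_le hab] at htmem
        exact abs_of_nonpos (gd_nonpos m r hm (lt_of_lt_of_le ha htmem.1) (le_trans ha' htmem.1))
      rw [this, intervalIntegral.integral_neg, integral_gd m r ha hab]
      ring
    · have hmin : min b t0 = t0 := min_eq_right hb
      have hmax : max a t0 = t0 := max_eq_right ha'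
      rw [hmin, hmax]
      have ht0pos : 0 < t0 := lt_of_lt_of_le ha ha'
      have hsplit : (∫ t in a..t0, |gd m r t|) + ∫ t in t0..b, |gd m r t|
          = ∫ t in a..b, |gd m r t| :=
        intervalIntegral.integral_add_adjacent_intervals
          (intInt_abs_gd m r ha ha') (intInt_abs_gd m r ht0pos hb)
      rw [← hsplit]
      have e1 : ∫ t in a..t0, |gd m r t| = ∫ t in a..t0, gd m r t := by
        apply intervalIntegral.integral_congr
        intro t htmem
        rw [uIcc_of_le ha'] at htmem
        exact abs_of_nonneg (gd_nonneg m r hm (lt_of_lt_of_le ha htmem.1) htmem.2)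
      have e2 : ∫ t in t0..b, |gd m r t| = ∫ t in t0..b, -gd m r t := by
        apply intervalIntegral.integral_congr
        intro t htmem
        rw [uIcc_of_le hb] at htmem
        exact abs_of_nonpos (gd_nonpos m r hm (lt_of_lt_of_le ht0pos htmem.1) htmem.1)
      rw [e1, e2, intervalIntegral.integral_neg, integral_gd m r ha ha',
        integral_gd m r ht0pos hb]
      ring

lemma norm_exp_I_mul (x : ℝ) : ‖Complex.exp (Complex.I * (x : ℂ))‖ = 1 := by
  rw [Complex.norm_exp]
  simp [Complex.mul_re]

lemma key (m r : ℝ) (hm : 0 < m) {α a b : ℝ} (hα : α ≠ 0) (ha : 0 < a) (hab : a ≤ b) :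
    ‖∫ t in a..b, Complex.exp (Complex.I * ((α * t : ℝ) : ℂ)) * ((gg m r t : ℝ) : ℂ)‖ ≤
      2 * gg m r (max a (min b (r^2/m))) / |α| := by
  set c : ℂ := Complex.I * (α : ℂ) with hc
  have hcne : c ≠ 0 := by
    simp [hc, Complex.I_ne_zero, Complex.ext_iff, hα]
  have hcnorm : ‖c‖ = |α| := by
    simp [hc]
  -- rewrite the integrand
  have hint : (fun t : ℝ => Complex.exp (Complex.I * ((α * t : ℝ) : ℂ)) * ((gg m r t : ℝ) : ℂ))
      = fun t : ℝ => ((gg m r t : ℝ) : ℂ) * Complex.exp (c * (t : ℂ)) := by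
    funext t
    rw [Complex.ofReal_mul, ← mul_assoc, mul_comm]
  have hu : ∀ t ∈ uIcc a b, HasDerivAt (fun t : ℝ => ((gg m r t : ℝ) : ℂ)) ((gd m r t : ℝ) : ℂ) t := by
    intro t htmem
    rw [uIcc_of_le hab] at htmem
    exact (hasDerivAt_gg m r (lt_of_lt_of_le ha htmem.1)).ofReal_comp
  have hv : ∀ t ∈ uIcc a b, HasDerivAt (fun t : ℝ => Complex.exp (c * (t : ℂ)) / c)
      (Complex.exp (c * (t : ℂ))) t := by
    intro t _
    have h0 : HasDerivAt (fun t : ℝ => c * (t : ℂ)) c t := by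
      simpa using (Complex.ofRealCLM.hasDerivAt (x := t)).const_mul c
    have := (h0.cexp).div_const c
    simpa [mul_div_cancel_right₀ _ hcne] using this
  have hu' : IntervalIntegrable (fun t : ℝ => ((gd m r t : ℝ) : ℂ)) volume a b := by
    have h := intInt_gd m r ha hab
    exact ⟨h.1.ofReal, h.2.ofReal⟩
  have hv' : IntervalIntegrable (fun t : ℝ => Complex.exp (c * (t : ℂ))) volume a b := by
    apply Continuous.intervalIntegrable
    exact Complex.continuous_exp.comp (continuous_const.mul Complex.continuous_ofReal)
  have hibp := intervalIntegral.integral_mul_deriv_eq_deriv_mul hu hv hu' hv'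
  rw [hint, hibp]
  have hnormexp : ∀ t : ℝ, ‖Complex.exp (c * (t : ℂ))‖ = 1 := by
    intro t
    rw [hc, mul_assoc, ← Complex.ofReal_mul]
    exact norm_exp_I_mul (α * t)
  have hb0 : 0 < b := lt_of_lt_of_le ha hab
  have hbd : ∀ t : ℝ, 0 < t →
      ‖((gg m r t : ℝ) : ℂ) * (Complex.exp (c * (t : ℂ)) / c)‖ = gg m r t / |α| := by
    intro t ht
    rw [norm_mul, norm_div, hnormexp, hcnorm, Complex.norm_real,
      Real.norm_eq_abs, abs_of_nonneg (gg_nonneg m r ht)]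
    ring
  have hIbound : ‖∫ t in a..b, ((gd m r t : ℝ) : ℂ) * (Complex.exp (c * (t : ℂ)) / c)‖ ≤
      (∫ t in a..b, |gd m r t|) / |α| := by
    have h1 := intervalIntegral.norm_integral_le_integral_norm (μ := volume)
      (f := fun t : ℝ => ((gd m r t : ℝ) : ℂ) * (Complex.exp (c * (t : ℂ)) / c)) hab
    have h2 : (∫ t in a..b, ‖((gd m r t : ℝ) : ℂ) * (Complex.exp (c * (t : ℂ)) / c)‖)
        = ∫ t in a..b, |gd m r t| / |α| := by
      apply intervalIntegral.integral_congr
      intro t _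
      simp only
      rw [norm_mul, norm_div, hnormexp, hcnorm, Complex.norm_real, Real.norm_eq_abs]
      ring
    rw [h2, intervalIntegral.integral_div] at h1
    exact h1
  calc ‖((gg m r b : ℝ) : ℂ) * (Complex.exp (c * (b : ℂ)) / c) -
        ((gg m r a : ℝ) : ℂ) * (Complex.exp (c * (a : ℂ)) / c) -
        ∫ t in a..b, ((gd m r t : ℝ) : ℂ) * (Complex.exp (c * (t : ℂ)) / c)‖
      ≤ ‖((gg m r b : ℝ) : ℂ) * (Complex.exp (c * (b : ℂ)) / c)‖ +
        ‖((gg m r a : ℝ) : ℂ) * (Complex.exp (c * (a : ℂ)) / c)‖ +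
        ‖∫ t in a..b, ((gd m r t : ℝ) : ℂ) * (Complex.exp (c * (t : ℂ)) / c)‖ := by
        exact le_trans (norm_sub_le _ _) (by gcongr; exact norm_sub_le _ _)
    _ ≤ gg m r b / |α| + gg m r a / |α| + (∫ t in a..b, |gd m r t|) / |α| := by
        rw [hbd b hb0, hbd a ha]
        gcongr
    _ = 2 * gg m r (max a (min b (r^2/m))) / |α| := by
        rw [integral_abs_gd m r hm ha hab]
        ring

lemma exp_mul_rpow_le (m : ℝ) (hm : 0 < m) {x : ℝ} (hx : 0 < x) :
    Real.exp (-x) * x ^ m ≤ m ^ m * Real.exp (-m) := by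
  rw [Real.rpow_def_of_pos hx, Real.rpow_def_of_pos hm, ← Real.exp_add, ← Real.exp_add]
  apply Real.exp_le_exp.mpr
  have hlog : Real.log (x / m) ≤ x / m - 1 := Real.log_le_sub_one_of_pos (div_pos hx hm)
  rw [Real.log_div hx.ne' hm.ne'] at hlog
  have h2 := mul_le_mul_of_nonneg_left hlog hm.le
  have hxm : m * (x / m) = x := by field_simp
  nlinarith [h2]

lemma rpow_two_mul (r : ℝ) (hr : 0 < r) (m : ℝ) : r ^ (2 * m) = (r ^ 2) ^ m := by
  rw [← Real.rpow_two, ← Real.rpow_mul hr.le]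

lemma gg_le_K (m r : ℝ) (hm : 0 < m) (hr : 0 < r) {t : ℝ} (ht : 0 < t) :
    gg m r t ≤ m ^ m * Real.exp (-m) / r ^ (2 * m) := by
  have hr2 : (0:ℝ) < r ^ 2 := by positivity
  have hx : (0:ℝ) < r ^ 2 / t := div_pos hr2 ht
  have htm : (0:ℝ) < t ^ m := Real.rpow_pos_of_pos ht m
  have hrm : (0:ℝ) < (r ^ 2) ^ m := Real.rpow_pos_of_pos hr2 m
  have hrw : gg m r t = Real.exp (-(r ^ 2 / t)) * (r ^ 2 / t) ^ m / (r ^ 2) ^ m := by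
    rw [gg, Real.div_rpow hr2.le ht.le]
    field_simp
  rw [hrw, rpow_two_mul r hr m]
  exact div_le_div_of_nonneg_right (exp_mul_rpow_le m hm hx) hrm.le

lemma gg_le_inv (m r : ℝ) {t : ℝ} (ht : 0 < t) : gg m r t ≤ 1 / t ^ m := by
  have htm : (0:ℝ) < t ^ m := Real.rpow_pos_of_pos ht m
  rw [gg]
  gcongr
  exact Real.exp_le_one_iff.mpr (neg_nonpos.mpr (div_nonneg (sq_nonneg r) ht.le))

lemma alg1 (m r β : ℝ) (hm : 0 < m) (hr : 0 < r) (hβ : 0 < β) :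
    (r ^ (2 * m / (m + 1)) * β ^ (-(1 / (m + 1)))) ^ m * β =
      r ^ (2 * m ^ 2 / (m + 1)) * β ^ (1 / (m + 1)) := by
  have hm1 : m + 1 ≠ 0 := by positivity
  rw [Real.mul_rpow (Real.rpow_nonneg hr.le _) (Real.rpow_nonneg hβ.le _),
    ← Real.rpow_mul hr.le, ← Real.rpow_mul hβ.le, mul_assoc,
    ← Real.rpow_add_one hβ.ne']
  have er : 2 * m / (m + 1) * m = 2 * m ^ 2 / (m + 1) := by ring
  have eβ : -(1 / (m + 1)) * m + 1 = 1 / (m + 1) := by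
    field_simp
    ring
  rw [er, eβ]

lemma alg2 (m r β K : ℝ) (hm : 0 < m) (hr : 0 < r) (hβ : 0 < β) :
    K / r ^ (2 * m) * (r ^ (2 * m / (m + 1)) * β ^ (-(1 / (m + 1)))) =
      K * (1 / (β ^ (1 / (m + 1)) * r ^ (2 * m ^ 2 / (m + 1)))) := by
  have hm1 : m + 1 ≠ 0 := by positivity
  have e1' : r ^ (2 * m / (m + 1)) = r ^ (-(2 * m ^ 2 / (m + 1))) * r ^ (2 * m) := by
    rw [← Real.rpow_add hr]
    congr 1
    field_simp
    ring
  rw [e1', Real.rpow_neg hr.le, Real.rpow_neg hβ.le]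
  have h1 : r ^ (2 * m) ≠ 0 := (Real.rpow_pos_of_pos hr _).ne'
  have h2 : β ^ (1 / (m + 1)) ≠ 0 := (Real.rpow_pos_of_pos hβ _).ne'
  have h3 : r ^ (2 * m ^ 2 / (m + 1)) ≠ 0 := (Real.rpow_pos_of_pos hr _).ne'
  field_simp

lemma measurable_gg (m r : ℝ) (hm : 0 < m) : Measurable (gg m r) := by
  apply Measurable.div
  · exact Real.measurable_exp.comp ((measurable_const.div measurable_id).neg)
  · have hc : Continuous (fun t : ℝ => t ^ m) := by
      rw [continuous_iff_continuousAt]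
      exact fun x => Real.continuousAt_rpow_const x m (Or.inr hm.le)
    exact hc.measurable

lemma norm_F (m r α : ℝ) {t : ℝ} (ht : 0 < t) :
    ‖Complex.exp (Complex.I * ((α * t : ℝ) : ℂ)) * ((gg m r t : ℝ) : ℂ)‖ = gg m r t := by
  rw [norm_mul, norm_exp_I_mul, one_mul, Complex.norm_real, Real.norm_eq_abs,
    abs_of_nonneg (gg_nonneg m r ht)]

lemma measurable_F (m r α : ℝ) (hm : 0 < m) :
    Measurable (fun t : ℝ => Complex.exp (Complex.I * ((α * t : ℝ) : ℂ)) * ((gg m r t : ℝ) : ℂ)) := by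
  apply Measurable.mul
  · exact Complex.measurable_exp.comp
      ((Complex.measurable_ofReal.comp (measurable_const.mul measurable_id)).const_mul Complex.I)
  · exact Complex.measurable_ofReal.comp (measurable_gg m r hm)

lemma intOn_F (m r α : ℝ) (hm : 0 < m) (hr : 0 < r) (x : ℝ) :
    IntegrableOn (fun t : ℝ => Complex.exp (Complex.I * ((α * t : ℝ) : ℂ)) * ((gg m r t : ℝ) : ℂ))
      (Ioc 0 x) := by
  apply Integrable.mono' (g := fun _ : ℝ => m ^ m * Real.exp (-m) / r ^ (2 * m))
  · exact integrableOn_const measure_Ioc_lt_top.ne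
  · exact ((measurable_F m r α hm).aestronglyMeasurable).restrict
  · rw [ae_restrict_iff' measurableSet_Ioc]
    filter_upwards with t ht
    rw [norm_F m r α ht.1]
    exact gg_le_K m r hm hr ht.1

lemma hsplit (m r α : ℝ) (hm : 0 < m) (hr : 0 < r) (hα : α ≠ 0) {ε T : ℝ}
    (hε : 0 < ε) (hεT : ε ≤ T) :
    ‖∫ t in Ioc (0:ℝ) T, Complex.exp (Complex.I * ((α * t : ℝ) : ℂ)) * ((gg m r t : ℝ) : ℂ)‖ ≤
      (m ^ m * Real.exp (-m) / r ^ (2 * m)) * ε +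
        2 * gg m r (max ε (min T (r^2/m))) / |α| := by
  have hT : (0:ℝ) ≤ T := (hε.trans_le hεT).le
  have i1 : IntervalIntegrable
      (fun t : ℝ => Complex.exp (Complex.I * ((α * t : ℝ) : ℂ)) * ((gg m r t : ℝ) : ℂ))
      volume 0 ε :=
    (intervalIntegrable_iff_integrableOn_Ioc_of_le hε.le).mpr (intOn_F m r α hm hr ε)
  have i2 : IntervalIntegrable
      (fun t : ℝ => Complex.exp (Complex.I * ((α * t : ℝ) : ℂ)) * ((gg m r t : ℝ) : ℂ))
      volume ε T :=
    (intervalIntegrable_iff_integrableOn_Ioc_of_le hεT).mpr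
      ((intOn_F m r α hm hr T).mono_set (Ioc_subset_Ioc_left hε.le))
  rw [← intervalIntegral.integral_of_le hT,
    ← intervalIntegral.integral_add_adjacent_intervals i1 i2]
  refine le_trans (norm_add_le _ _) ?_
  have b1 : ‖∫ t in (0:ℝ)..ε, Complex.exp (Complex.I * ((α * t : ℝ) : ℂ)) * ((gg m r t : ℝ) : ℂ)‖
      ≤ (m ^ m * Real.exp (-m) / r ^ (2 * m)) * ε := by
    have := intervalIntegral.norm_integral_le_of_norm_le_const
      (C := m ^ m * Real.exp (-m) / r ^ (2 * m)) (a := (0:ℝ)) (b := ε)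
      (f := fun t : ℝ => Complex.exp (Complex.I * ((α * t : ℝ) : ℂ)) * ((gg m r t : ℝ) : ℂ))
      ?_
    · simpa [abs_of_nonneg hε.le] using this
    · intro x hx
      rw [uIoc_of_le hε.le] at hx
      rw [norm_F m r α hx.1]
      exact gg_le_K m r hm hr hx.1
  have b2 := key m r hm hα hε hεT
  linarith [b1, b2]

theorem stmt_4 (m : ℝ) (hm : 0 < m) :
    ∃ C > 0, ∀ (α r : ℝ), α ≠ 0 → 0 < r → ∀ I : ℂ,
      Tendsto (fun T : ℝ =>
          ∫ t in Ioc (0 : ℝ) T,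
            Complex.exp (Complex.I * ((α * t : ℝ) : ℂ)) *
              ((Real.exp (-(r ^ 2 / t)) / t ^ m : ℝ) : ℂ))
        atTop (nhds I) →
      ‖I‖ ≤ C * min (1 / (|α| * r ^ (2 * m)))
              (1 / (|α| ^ (1 / (m + 1)) * r ^ (2 * m ^ 2 / (m + 1)))) := by
  have hKpos : 0 < m ^ m * Real.exp (-m) := by positivity
  set K := m ^ m * Real.exp (-m) with hK
  refine ⟨2 * K + 2, by positivity, ?_⟩
  intro α r hα hr I hI
  have hβ : 0 < |α| := abs_pos.mpr hα
  have hrm : 0 < r ^ (2 * m) := Real.rpow_pos_of_pos hr _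
  have hKr : 0 < K / r ^ (2 * m) := div_pos hKpos hrm
  have hI' : Tendsto (fun T : ℝ =>
      ‖∫ t in Ioc (0:ℝ) T,
        Complex.exp (Complex.I * ((α * t : ℝ) : ℂ)) * ((gg m r t : ℝ) : ℂ)‖)
      atTop (nhds ‖I‖) := hI.norm
  -- first bound
  have h1 : ‖I‖ ≤ (2 * K + 2) * (1 / (|α| * r ^ (2 * m))) := by
    apply le_of_tendsto hI'
    filter_upwards [eventually_gt_atTop (0:ℝ)] with T hT
    apply le_of_forall_pos_le_add
    intro δ hδ
    set ε := min T (δ / (K / r ^ (2 * m))) with hεdef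
    have hε : 0 < ε := lt_min hT (div_pos hδ hKr)
    have hεT : ε ≤ T := min_le_left _ _
    have htc : 0 < max ε (min T (r^2/m)) := lt_of_lt_of_le hε (le_max_left _ _)
    calc ‖∫ t in Ioc (0:ℝ) T,
          Complex.exp (Complex.I * ((α * t : ℝ) : ℂ)) * ((gg m r t : ℝ) : ℂ)‖
        ≤ (K / r ^ (2 * m)) * ε + 2 * gg m r (max ε (min T (r^2/m))) / |α| :=
          hsplit m r α hm hr hα hε hεT
      _ ≤ (K / r ^ (2 * m)) * (δ / (K / r ^ (2 * m))) + 2 * (K / r ^ (2 * m)) / |α| := by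
          gcongr
          · exact min_le_right _ _
          · exact gg_le_K m r hm hr htc
      _ ≤ (2 * K + 2) * (1 / (|α| * r ^ (2 * m))) + δ := by
          rw [mul_div_cancel₀ _ hKr.ne']
          have e1 : 2 * (K / r ^ (2 * m)) / |α| = (2 * K) * (1 / (|α| * r ^ (2 * m))) := by
            field_simp
          rw [e1]
          have hXnn : (0:ℝ) ≤ 1 / (|α| * r ^ (2 * m)) := by positivity
          have : (2 * K) * (1 / (|α| * r ^ (2 * m))) ≤
              (2 * K + 2) * (1 / (|α| * r ^ (2 * m))) :=
            mul_le_mul_of_nonneg_right (by linarith) hXnn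
          linarith
  -- second bound
  have h2 : ‖I‖ ≤ (2 * K + 2) *
      (1 / (|α| ^ (1 / (m + 1)) * r ^ (2 * m ^ 2 / (m + 1)))) := by
    set L := r ^ (2 * m / (m + 1)) * |α| ^ (-(1 / (m + 1))) with hLdef
    have hL : 0 < L := mul_pos (Real.rpow_pos_of_pos hr _) (Real.rpow_pos_of_pos hβ _)
    have hLm : 0 < L ^ m := Real.rpow_pos_of_pos hL _
    apply le_of_tendsto hI'
    filter_upwards [eventually_ge_atTop L] with T hTL
    have htc : 0 < max L (min T (r^2/m)) := lt_of_lt_of_le hL (le_max_left _ _)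
    have htcL : L ≤ max L (min T (r^2/m)) := le_max_left _ _
    have hBpos : 0 < 1 / (|α| ^ (1 / (m + 1)) * r ^ (2 * m ^ 2 / (m + 1))) := by
      have := Real.rpow_pos_of_pos hβ (1 / (m + 1))
      have := Real.rpow_pos_of_pos hr (2 * m ^ 2 / (m + 1))
      positivity
    calc ‖∫ t in Ioc (0:ℝ) T,
          Complex.exp (Complex.I * ((α * t : ℝ) : ℂ)) * ((gg m r t : ℝ) : ℂ)‖
        ≤ (K / r ^ (2 * m)) * L + 2 * gg m r (max L (min T (r^2/m))) / |α| :=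
          hsplit m r α hm hr hα hL hTL
      _ ≤ (K / r ^ (2 * m)) * L + 2 * (1 / L ^ m) / |α| := by
          gcongr
          calc gg m r (max L (min T (r^2/m))) ≤ 1 / (max L (min T (r^2/m))) ^ m :=
                gg_le_inv m r htc
            _ ≤ 1 / L ^ m := by
                have : L ^ m ≤ (max L (min T (r^2/m))) ^ m :=
                  Real.rpow_le_rpow hL.le htcL hm.le
                exact one_div_le_one_div_of_le hLm this
      _ = K * (1 / (|α| ^ (1 / (m + 1)) * r ^ (2 * m ^ 2 / (m + 1)))) +
            2 * (1 / (|α| ^ (1 / (m + 1)) * r ^ (2 * m ^ 2 / (m + 1)))) := by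
          rw [alg2 m r |α| K hm hr hβ]
          congr 1
          have halg := alg1 m r |α| hm hr hβ
          rw [← hLdef] at halg
          have hβf : 0 < |α| ^ (1 / (m + 1)) := Real.rpow_pos_of_pos hβ _
          have hre : 0 < r ^ (2 * m ^ 2 / (m + 1)) := Real.rpow_pos_of_pos hr _
          field_simp
          nlinarith [halg]
      _ ≤ (2 * K + 2) * (1 / (|α| ^ (1 / (m + 1)) * r ^ (2 * m ^ 2 / (m + 1)))) := by
          nlinarith [hBpos, hKpos]
  rw [mul_min_of_nonneg _ _ (by positivity : (0:ℝ) ≤ 2 * K + 2)]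
  exact le_min h1 h2
end

section
/- Let G(x,t) = (4πt)^{-1} e^{-|x|²/(4t)} be the two-dimensional Gauss kernel and let O(θ) be the rotation matrix by angle θ. For every m > 1 there is a constant C = C(m), independent of x, y ∈ ℝ² and α ∈ ℝ, such that for all x, y with |x| > 2|y|: ∫₀^∞ | e^{-|O(αt)x - y|²/(4t)} − e^{-|x|²/(4t)} | t^{-m} dt ≤ C |y| / |x|^{2m-1}. -/
open MeasureTheory Set

/-- Mean-value type bound for differences of exponentials. -/
lemma exp_diff_le_aux {u v L : ℝ} (hu : L ≤ u) (hv : L ≤ v) :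
    |Real.exp (-u) - Real.exp (-v)| ≤ |u - v| * Real.exp (-L) := by
  wlog h : u ≤ v generalizing u v
  · rw [abs_sub_comm, abs_sub_comm u v]
    exact this hv hu (le_of_not_ge h)
  rw [abs_of_nonneg (sub_nonneg.2 (Real.exp_le_exp.2 (neg_le_neg h))),
    abs_of_nonpos (by linarith : u - v ≤ 0), neg_sub]
  have h1 : Real.exp (-u) - Real.exp (-v) = Real.exp (-u) * (1 - Real.exp (-(v - u))) := by
    rw [mul_sub, mul_one, ← Real.exp_add]; ring_nf
  have h2 : 1 - Real.exp (-(v - u)) ≤ v - u := by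
    nlinarith [Real.add_one_le_exp (-(v - u))]
  have h4 : 0 ≤ 1 - Real.exp (-(v - u)) := by
    have := Real.exp_le_one_iff.mpr (by linarith : -(v - u) ≤ 0)
    linarith
  have h3 : Real.exp (-u) ≤ Real.exp (-L) := Real.exp_le_exp.2 (by linarith)
  calc Real.exp (-u) - Real.exp (-v) = Real.exp (-u) * (1 - Real.exp (-(v - u))) := h1
    _ ≤ Real.exp (-L) * (v - u) :=
        mul_le_mul h3 h2 h4 (Real.exp_nonneg _)
    _ = (v - u) * Real.exp (-L) := mul_comm _ _

/-- Pointwise identity used for the substitution `t ↦ t⁻¹`. -/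
lemma subst_eq_aux (m : ℝ) {c : ℝ} :
    ∀ x ∈ Ioi (0 : ℝ),
      (|(-1 : ℝ)| * x ^ ((-1 : ℝ) - 1)) •
        ((fun s : ℝ => s ^ (m - 1) * Real.exp (-c * s)) (x ^ (-1 : ℝ)))
      = Real.exp (-c / x) / x ^ (m + 1) := by
  intro x hx
  have hx0 : (0 : ℝ) < x := hx
  have e1 : x ^ ((-1 : ℝ) - 1) = (x ^ (m + 1 : ℝ))⁻¹ * x ^ (m - 1 : ℝ) := by
    rw [← Real.rpow_neg hx0.le, ← Real.rpow_add hx0]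
    congr 1
    ring
  have e2 : (x ^ (-1 : ℝ)) ^ (m - 1 : ℝ) = (x ^ (m - 1 : ℝ))⁻¹ := by
    rw [Real.rpow_neg_one, Real.inv_rpow hx0.le]
  have e3 : x ^ (m - 1 : ℝ) ≠ 0 := (Real.rpow_pos_of_pos hx0 _).ne'
  have e4 : x ^ (m + 1 : ℝ) ≠ 0 := (Real.rpow_pos_of_pos hx0 _).ne'
  simp only [smul_eq_mul, abs_neg, abs_one, one_mul, e1, e2, Real.rpow_neg_one,
    ← div_eq_mul_inv]
  field_simp
  rw [one_div, Real.inv_rpow hx0.le, mul_inv_cancel₀ e3]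

lemma aux_integrable (m : ℝ) (hm : 1 < m) {c : ℝ} (hc : 0 < c) :
    IntegrableOn (fun t : ℝ => Real.exp (-c / t) / t ^ (m + 1)) (Ioi 0) := by
  have hint : IntegrableOn (fun x : ℝ => x ^ (m - 1) * Real.exp (-c * x)) (Ioi 0) := by
    have := integrableOn_rpow_mul_exp_neg_mul_rpow (p := 1) (s := m - 1) (b := c)
      (by linarith) one_pos hc
    simpa only [Real.rpow_one] using this
  have h := (integrableOn_Ioi_comp_rpow_iff
      (fun s : ℝ => s ^ (m - 1) * Real.exp (-c * s)) (p := -1) (by norm_num)).mpr hint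
  exact (integrableOn_congr_fun (fun x hx => subst_eq_aux m x hx) measurableSet_Ioi).mp h

lemma aux_integral (m : ℝ) (hm : 1 < m) {c : ℝ} (hc : 0 < c) :
    ∫ t in Ioi (0 : ℝ), Real.exp (-c / t) / t ^ (m + 1) = c ^ (-m) * Real.Gamma m := by
  have h1 : (∫ x in Ioi (0 : ℝ),
      (|(-1 : ℝ)| * x ^ ((-1 : ℝ) - 1)) •
        ((fun s : ℝ => s ^ (m - 1) * Real.exp (-c * s)) (x ^ (-1 : ℝ))))
      = ∫ y in Ioi (0 : ℝ), y ^ (m - 1) * Real.exp (-c * y) :=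
    integral_comp_rpow_Ioi (fun s : ℝ => s ^ (m - 1) * Real.exp (-c * s)) (p := -1) (by norm_num)
  have h2 : (∫ t in Ioi (0 : ℝ), Real.exp (-c / t) / t ^ (m + 1))
      = ∫ x in Ioi (0 : ℝ),
        (|(-1 : ℝ)| * x ^ ((-1 : ℝ) - 1)) •
          ((fun s : ℝ => s ^ (m - 1) * Real.exp (-c * s)) (x ^ (-1 : ℝ))) :=
    (setIntegral_congr_fun measurableSet_Ioi (fun x hx => subst_eq_aux m x hx)).symm
  have h3 : (∫ y in Ioi (0 : ℝ), y ^ (m - 1) * Real.exp (-c * y))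
      = c ^ (-m) * Real.Gamma m := by
    have := integral_rpow_mul_exp_neg_mul_rpow (p := 1) (q := m - 1) (b := c)
      one_pos (by linarith) hc
    simp only [Real.rpow_one] at this
    rw [this]
    norm_num
  rw [h2, h1, h3]

/-- Points of the plane are identified with complex numbers; the rotation
`O(αt)` acts as multiplication by `exp(i α t)`, which preserves the norm. -/
theorem stmt_8 (m : ℝ) (hm : 1 < m) :
    ∃ C > 0, ∀ (α : ℝ) (x y : ℂ), 2 * ‖y‖ < ‖x‖ →
      (∫ t in Ioi (0 : ℝ),
          |Real.exp (-(‖Complex.exp (Complex.I * ((α * t : ℝ) : ℂ)) * x - y‖) ^ 2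
                / (4 * t))
            - Real.exp (-(‖x‖) ^ 2 / (4 * t))| / t ^ m)
        ≤ C * ‖y‖ / ‖x‖ ^ (2 * m - 1) := by
  have hΓ : 0 < Real.Gamma m := Real.Gamma_pos_of_pos (by linarith)
  refine ⟨(5 / 8 : ℝ) * 16 ^ m * Real.Gamma m, by positivity, ?_⟩
  intro α x y hxy
  set r : ℝ := ‖x‖ with hr_def
  set ay : ℝ := ‖y‖ with hay_def
  have hay0 : 0 ≤ ay := norm_nonneg y
  have hr : 0 < r := lt_of_le_of_lt (by positivity) hxy
  set c : ℝ := r ^ 2 / 16 with hc_def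
  have hc : 0 < c := by positivity
  set K : ℝ := 5 / 8 * r * ay with hK_def
  have hK0 : 0 ≤ K := by positivity
  -- the dominating function
  have hint : IntegrableOn (fun t : ℝ => K * (Real.exp (-c / t) / t ^ (m + 1))) (Ioi 0) :=
    (aux_integrable m hm hc).const_mul K
  have hzabs : ∀ t : ℝ, ‖Complex.exp (Complex.I * ((α * t : ℝ) : ℂ)) * x‖ = r := by
    intro t
    rw [norm_mul, mul_comm Complex.I, Complex.norm_exp_ofReal_mul_I, one_mul]
  -- pointwise bound on Ioi 0
  have hbound : ∀ t ∈ Ioi (0 : ℝ),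
      |Real.exp (-(‖Complex.exp (Complex.I * ((α * t : ℝ) : ℂ)) * x - y‖) ^ 2
            / (4 * t))
        - Real.exp (-(‖x‖) ^ 2 / (4 * t))| / t ^ m
      ≤ K * (Real.exp (-c / t) / t ^ (m + 1)) := by
    intro t ht
    have ht0 : (0 : ℝ) < t := ht
    set z : ℂ := Complex.exp (Complex.I * ((α * t : ℝ) : ℂ)) * x with hz_def
    have hz : ‖z‖ = r := hzabs t
    set A : ℝ := (‖z - y‖) ^ 2 with hA_def
    have hzy : r / 2 ≤ ‖z - y‖ := by
      have h1 : ‖z‖ ≤ ‖z - y‖ + ‖y‖ := by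
        calc ‖z‖ = ‖z - y + y‖ := by ring_nf
          _ ≤ ‖z - y‖ + ‖y‖ := norm_add_le _ _
      rw [hz] at h1
      linarith
    have hA : r ^ 2 / 4 ≤ A := by
      have := pow_le_pow_left₀ (by positivity : (0:ℝ) ≤ r / 2) hzy 2
      calc r ^ 2 / 4 = (r / 2) ^ 2 := by ring
        _ ≤ A := this
    have hAb : |A - r ^ 2| ≤ 5 / 2 * r * ay := by
      have e1 : A - r ^ 2 = ay ^ 2 - 2 * (z * (starRingEnd ℂ) y).re := by
        rw [hA_def, Complex.sq_norm, Complex.normSq_sub, ← Complex.sq_norm z,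
          ← Complex.sq_norm y, hz]
        ring
      have e2 : |(z * (starRingEnd ℂ) y).re| ≤ r * ay := by
        calc |(z * (starRingEnd ℂ) y).re| ≤ ‖z * (starRingEnd ℂ) y‖ :=
              Complex.abs_re_le_norm _
          _ = r * ay := by rw [norm_mul, Complex.norm_conj, hz]
      have e3 : ay ^ 2 ≤ r / 2 * ay := by
        have : ay ≤ r / 2 := by linarith
        nlinarith
      rw [e1]
      rw [abs_le]
      constructor
      · nlinarith [abs_le.mp e2]
      · nlinarith [abs_le.mp e2]
    -- apply the exponential difference bound
    have hL1 : c / t ≤ A / (4 * t) := by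
      rw [hc_def, div_le_div_iff₀ ht0 (by positivity)]
      nlinarith
    have hL2 : c / t ≤ r ^ 2 / (4 * t) := by
      rw [hc_def, div_le_div_iff₀ ht0 (by positivity)]
      nlinarith
    have hdiff : |Real.exp (-(A / (4 * t))) - Real.exp (-(r ^ 2 / (4 * t)))|
        ≤ |A / (4 * t) - r ^ 2 / (4 * t)| * Real.exp (-(c / t)) :=
      exp_diff_le_aux hL1 hL2
    have habsdiff : |A / (4 * t) - r ^ 2 / (4 * t)| ≤ (5 / 2 * r * ay) / (4 * t) := by
      rw [div_sub_div_same, abs_div, abs_of_pos (by positivity : (0:ℝ) < 4 * t)]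
      exact div_le_div_of_nonneg_right hAb (by positivity) |>.trans_eq rfl
    have hrw : -(‖z - y‖) ^ 2 / (4 * t) = -(A / (4 * t)) := by
      rw [hA_def]; ring
    have hrw2 : -(‖x‖) ^ 2 / (4 * t) = -(r ^ 2 / (4 * t)) := by
      rw [← hr_def]; ring
    rw [hrw, hrw2]
    have htm : (0 : ℝ) < t ^ m := Real.rpow_pos_of_pos ht0 m
    have step1 : |Real.exp (-(A / (4 * t))) - Real.exp (-(r ^ 2 / (4 * t)))| / t ^ m
        ≤ ((5 / 2 * r * ay) / (4 * t) * Real.exp (-(c / t))) / t ^ m := by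
      apply div_le_div_of_nonneg_right _ htm.le
      calc |Real.exp (-(A / (4 * t))) - Real.exp (-(r ^ 2 / (4 * t)))|
          ≤ |A / (4 * t) - r ^ 2 / (4 * t)| * Real.exp (-(c / t)) := hdiff
        _ ≤ (5 / 2 * r * ay) / (4 * t) * Real.exp (-(c / t)) :=
            mul_le_mul_of_nonneg_right habsdiff (Real.exp_nonneg _)
    refine step1.trans_eq ?_
    have htpow : t ^ (m + 1 : ℝ) = t ^ m * t := by
      rw [Real.rpow_add ht0, Real.rpow_one]
    have ht' : t ≠ 0 := ht0.ne'
    have htm' : t ^ m ≠ 0 := htm.ne'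
    rw [htpow, hK_def, neg_div]
    rw [div_mul_eq_mul_div, div_div, ← mul_div_assoc,
      div_eq_div_iff (by positivity : (4 * t * t ^ m : ℝ) ≠ 0) (by positivity : (t ^ m * t : ℝ) ≠ 0)]
    ring
  -- nonnegativity of the integrand on Ioi 0
  have hnonneg : ∀ t ∈ Ioi (0 : ℝ),
      0 ≤ |Real.exp (-(‖Complex.exp (Complex.I * ((α * t : ℝ) : ℂ)) * x - y‖) ^ 2
            / (4 * t))
        - Real.exp (-(‖x‖) ^ 2 / (4 * t))| / t ^ m := by
    intro t ht
    have : (0 : ℝ) < t ^ m := Real.rpow_pos_of_pos ht m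
    positivity
  have hmono : (∫ t in Ioi (0 : ℝ),
        |Real.exp (-(‖Complex.exp (Complex.I * ((α * t : ℝ) : ℂ)) * x - y‖) ^ 2
              / (4 * t))
          - Real.exp (-(‖x‖) ^ 2 / (4 * t))| / t ^ m)
      ≤ ∫ t in Ioi (0 : ℝ), K * (Real.exp (-c / t) / t ^ (m + 1)) := by
    apply integral_mono_of_nonneg
    · exact (ae_restrict_iff' measurableSet_Ioi).2 (Filter.Eventually.of_forall hnonneg)
    · exact hint
    · exact (ae_restrict_iff' measurableSet_Ioi).2 (Filter.Eventually.of_forall hbound)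
  refine hmono.trans ?_
  rw [integral_const_mul, aux_integral m hm hc]
  -- final computation with powers
  have hcpow : c ^ (-m : ℝ) = 16 ^ m / r ^ (2 * m : ℝ) := by
    have h2 : ((r : ℝ) ^ 2) ^ (m : ℝ) = r ^ (2 * m : ℝ) := by
      rw [show (r : ℝ) ^ 2 = r ^ ((2 : ℕ) : ℝ) from (Real.rpow_natCast r 2).symm,
        ← Real.rpow_mul hr.le]
      norm_num
    rw [hc_def, Real.rpow_neg (by positivity),
      Real.div_rpow (by positivity) (by norm_num : (0:ℝ) ≤ 16), h2, inv_div]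
  have hrsplit : r ^ (2 * m : ℝ) = r ^ (2 * m - 1 : ℝ) * r := by
    have h := Real.rpow_add hr (2 * m - 1) 1
    rw [Real.rpow_one] at h
    rw [← h]
    congr 1
    ring
  have hrpos : (0 : ℝ) < r ^ (2 * m - 1 : ℝ) := Real.rpow_pos_of_pos hr _
  have hrpos2 : (0 : ℝ) < r ^ (2 * m : ℝ) := Real.rpow_pos_of_pos hr _
  have hfin : K * (c ^ (-m : ℝ) * Real.Gamma m)
      = 5 / 8 * 16 ^ m * Real.Gamma m * ay / r ^ (2 * m - 1 : ℝ) := by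
    rw [hK_def, hcpow, hrsplit]
    field_simp
  exact hfin.le
end
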